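/- If the period τ is odd, then N is a sum of two squares; more precisely N = Q_{(τ+1)/2}² + P_{(τ+1)/2}². -/

import Mathlib

set_option maxHeartbeats 1000000

theorem stmt_9
    (N : ℕ) (hN : 0 < N) (hNsq : ¬ IsSquare N)
    (a P Q : ℤ → ℤ)
    (hP0 : P 0 = 0) (hQ0 : Q 0 = 1)
    (ha : ∀ m : ℤ, 0 ≤ m → a m = ⌊((P m : ℝ) + Real.sqrt N) / (Q m : ℝ)⌋)
    (hPrec : ∀ m : ℤ, 0 ≤ m → P (m + 1) = a m * Q m - P m)
    (hQrec : ∀ m : ℤ, 0 ≤ m → Q (m + 1) * Q m = (N : ℤ) - P (m + 1) ^ 2)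
    (τ : ℕ) (hτ : 0 < τ)
    (hper : ∀ n : ℤ, 1 ≤ n → a (n + τ) = a n)
    (hmin : ∀ τ' : ℕ, 0 < τ' → (∀ n : ℤ, 1 ≤ n → a (n + τ') = a n) → τ ≤ τ')
    (hτodd : Odd τ)
    :
    (∃ x y : ℤ, (N : ℤ) = x ^ 2 + y ^ 2)
      ∧ (N : ℤ) = Q (((τ + 1) / 2 : ℕ)) ^ 2 + P (((τ + 1) / 2 : ℕ)) ^ 2 := by
  set s : ℝ := Real.sqrt N with hsdef
  have hirr : Irrational s := irrational_sqrt_natCast_iff.mpr hNsq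
  have hs0 : (0:ℝ) ≤ s := Real.sqrt_nonneg _
  have hs2 : s ^ 2 = (N:ℝ) := Real.sq_sqrt (by positivity)
  have hN2 : 2 ≤ N := by
    rcases Nat.lt_or_ge N 2 with h | h
    · have h1 : N = 1 := by omega
      rw [h1] at hNsq
      exact absurd IsSquare.one hNsq
    · exact h
  have hNR : (2:ℝ) ≤ (N:ℝ) := by exact_mod_cast hN2
  have hs1 : 1 < s := by nlinarith
  -- Q (m+1) ≠ 0
  have hQne : ∀ m : ℤ, 0 ≤ m → Q (m+1) ≠ 0 := by
    intro m hm h0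
    have h := hQrec m hm
    rw [h0, zero_mul] at h
    have h2 : (N:ℤ) = P (m+1) ^ 2 := by linarith
    apply hNsq
    refine ⟨(P (m+1)).natAbs, ?_⟩
    have : ((N:ℤ)).natAbs = ((P (m+1)) ^ 2).natAbs := by rw [h2]
    simpa [Int.natAbs_mul, sq] using this
  -- floor bounds
  have hfloor : ∀ m : ℤ, 0 ≤ m → 0 < Q m →
      ((a m : ℝ) * Q m < (P m : ℝ) + s ∧ (P m:ℝ) + s < ((a m : ℝ) + 1) * Q m) := by
    intro m hm hQ
    have hQR : (0:ℝ) < (Q m : ℝ) := by exact_mod_cast hQ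
    have hx2 : Irrational (((P m : ℝ) + s) / (Q m : ℝ)) :=
      (hirr.intCast_add (P m)).div_intCast (by exact_mod_cast hQ.ne')
    have hfl := ha m hm
    have h1 : (a m : ℝ) < ((P m:ℝ) + s) / (Q m : ℝ) := by
      rw [hfl]
      exact lt_of_le_of_ne (Int.floor_le _) (fun he => hx2.ne_int _ he.symm)
    have h2 : ((P m:ℝ) + s) / (Q m : ℝ) < (a m : ℝ) + 1 := by
      rw [hfl]; push_cast; exact Int.lt_floor_add_one _
    constructor
    · exact (lt_div_iff₀ hQR).mp h1
    · exact (div_lt_iff₀ hQR).mp h2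
  -- fractional-part bounds
  have hfr : ∀ m : ℤ, 0 ≤ m → 0 < Q m →
      ((0:ℝ) < s - (P (m+1) : ℝ) ∧ s - (P (m+1) : ℝ) < (Q m : ℝ)) := by
    intro m hm hQ
    obtain ⟨h1, h2⟩ := hfloor m hm hQ
    have hp := hPrec m hm
    have hpc : (P (m+1) : ℝ) = (a m : ℝ) * Q m - (P m : ℝ) := by
      rw [hp]; push_cast; ring
    constructor <;> [linarith [hpc]; nlinarith [hpc]]
  -- base values
  have ha0 : a 0 = ⌊s⌋ := by
    have := ha 0 le_rfl
    rw [hP0, hQ0] at this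
    simpa using this
  have hP1 : P 1 = ⌊s⌋ := by
    have := hPrec 0 le_rfl
    rw [hP0, hQ0, ha0] at this
    simpa using this
  have hQ1 : Q 1 = (N:ℤ) - ⌊s⌋ ^ 2 := by
    have h := hQrec 0 le_rfl
    rw [hQ0] at h
    norm_num at h
    rw [hP1] at h
    linarith
  have hfl1 : (⌊s⌋ : ℝ) < s := lt_of_le_of_ne (Int.floor_le _) (fun he => hirr.ne_int _ he.symm)
  have hfl2 : s < (⌊s⌋ : ℝ) + 1 := Int.lt_floor_add_one _
  have hfl3 : (1:ℤ) ≤ ⌊s⌋ := by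
    rw [Int.le_floor]; push_cast; linarith
  have hfl3R : (1:ℝ) ≤ (⌊s⌋:ℝ) := by exact_mod_cast hfl3
  -- Red invariant
  have hRed : ∀ m : ℤ, 1 ≤ m → (0 < Q m ∧ 0 < P m ∧ ((P m:ℝ) < s ∧
      (Q m:ℝ) < (P m : ℝ) + s ∧ s < (P m : ℝ) + (Q m : ℝ))) := by
    refine Int.le_induction ?_ ?_
    ·
      have hQ1R : (Q 1 : ℝ) = (N:ℝ) - (⌊s⌋:ℝ)^2 := by rw [hQ1]; push_cast; ring
      have hQ1pos : (0:ℝ) < (Q 1 : ℝ) := by rw [hQ1R]; nlinarith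
      refine ⟨by exact_mod_cast hQ1pos, by rw [hP1]; omega, ?_, ?_, ?_⟩
      · rw [hP1]; exact hfl1
      · rw [hQ1R, hP1]; nlinarith
      · have : (1:ℝ) ≤ (Q 1:ℝ) := by exact_mod_cast (by exact_mod_cast hQ1pos : 0 < Q 1)
        rw [hP1]; push_cast; linarith
    · intro m hm ih
      obtain ⟨hq, hp, hps, hr4, hr5⟩ := ih
      have hm0 : (0:ℤ) ≤ m := by omega
      have hqR : (0:ℝ) < (Q m : ℝ) := by exact_mod_cast hq
      have hpR : (0:ℝ) < (P m : ℝ) := by exact_mod_cast hp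
      obtain ⟨hf1, hf2⟩ := hfr m hm0 hq
      -- a m ≥ 1
      have haR : (1:ℝ) ≤ (a m : ℝ) := by
        have := ha m hm0
        have h1 : (1:ℤ) ≤ a m := by
          rw [this, Int.le_floor]
          rw [le_div_iff₀ hqR]; push_cast; linarith
        exact_mod_cast h1
      have hpc : (P (m+1) : ℝ) = (a m : ℝ) * Q m - (P m : ℝ) := by
        rw [hPrec m hm0]; push_cast; ring
      -- p' + s > q
      have hps' : (Q m : ℝ) < (P (m+1) : ℝ) + s := by nlinarith
      have hqrc : (Q (m+1) : ℝ) * (Q m : ℝ) = (N:ℝ) - (P (m+1):ℝ)^2 := by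
        have := hQrec m hm0
        have : ((Q (m+1) * Q m : ℤ) : ℝ) = (((N : ℤ) - P (m+1)^2 : ℤ) : ℝ) := by rw [this]
        push_cast at this; linarith
      have hfact : (Q (m+1) : ℝ) * (Q m : ℝ) = (s - (P (m+1):ℝ)) * (s + (P (m+1):ℝ)) := by
        rw [hqrc]; linear_combination (-1 : ℝ) * hs2
      have hsum : (0:ℝ) < s + (P (m+1):ℝ) := by linarith
      have hprod : (0:ℝ) < (Q (m+1) : ℝ) * (Q m : ℝ) := by
        rw [hfact]; exact mul_pos hf1 hsum
      have hq'pos : (0:ℝ) < (Q (m+1) : ℝ) := by nlinarith [hprod, hqR]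
      have hr4' : (Q (m+1) : ℝ) < (P (m+1) : ℝ) + s := by nlinarith [hfact, hf2, hsum, hqR]
      have hr5' : s < (P (m+1) : ℝ) + (Q (m+1) : ℝ) := by nlinarith [hfact, hf1, hps', hqR]
      have hp'pos : (0:ℝ) < (P (m+1) : ℝ) := by linarith
      exact ⟨by exact_mod_cast hq'pos, by exact_mod_cast hp'pos, by linarith, hr4', hr5'⟩
  have hQposZ : ∀ m : ℤ, 0 ≤ m → 0 < Q m := by
    intro m hm
    rcases eq_or_lt_of_le hm with h | h
    · rw [← h, hQ0]; norm_num
    · exact (hRed m (by omega)).1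
  -- uniqueness of P in a residue class within interval (s - q, s)
  have huniq : ∀ x y q : ℤ, 0 < q → q ∣ (x - y) → s - (q:ℝ) < (x:ℝ) → (x:ℝ) < s →
      s - (q:ℝ) < (y:ℝ) → (y:ℝ) < s → x = y := by
    intro x y q hq hdvd hx1 hx2 hy1 hy2
    obtain ⟨c, hc⟩ := hdvd
    have habs : |((x - y : ℤ) : ℝ)| < (q:ℝ) := by
      rw [abs_lt]; push_cast; constructor <;> linarith
    have habsZ : |x - y| < q := by exact_mod_cast habs
    have hc0 : c = 0 := by
      by_contra h
      have h1 : 1 ≤ |c| := Int.one_le_abs h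
      have : q ≤ |q * c| := by
        rw [abs_mul, abs_of_pos hq]
        nlinarith [abs_nonneg c]
      rw [hc] at habsZ; omega
    rw [hc0, mul_zero] at hc; omega
  -- injectivity of quadratic surd representation
  have hsurd : ∀ p q p2 q2 : ℤ, 0 < q → 0 < q2 →
      ((p:ℝ) + s) / (q:ℝ) = ((p2:ℝ) + s) / (q2:ℝ) → p = p2 ∧ q = q2 := by
    intro p q p2 q2 hq hq2 heq
    have hqR : (0:ℝ) < (q:ℝ) := by exact_mod_cast hq
    have hq2R : (0:ℝ) < (q2:ℝ) := by exact_mod_cast hq2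
    have hcross : ((p:ℝ) + s) * (q2:ℝ) = ((p2:ℝ) + s) * (q:ℝ) := by
      field_simp at heq; linarith
    have hkey : ((p * q2 - p2 * q : ℤ) : ℝ) = s * ((q - q2 : ℤ) : ℝ) := by
      push_cast; nlinarith [hcross]
    have hqq : q = q2 := by
      by_contra hne
      have hne2 : ((q - q2 : ℤ) : ℝ) ≠ 0 := Int.cast_ne_zero.mpr (sub_ne_zero.mpr hne)
      have : s = ((p * q2 - p2 * q : ℤ) : ℝ) / ((q - q2 : ℤ) : ℝ) := by
        rw [eq_div_iff hne2]; linear_combination -hkey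
      apply hirr
      refine ⟨((p * q2 - p2 * q : ℤ) : ℚ) / ((q - q2 : ℤ) : ℚ), ?_⟩
      rw [this]; push_cast; ring
    refine ⟨?_, hqq⟩
    rw [hqq] at hcross
    have : ((p:ℝ)) = (p2:ℝ) := by
      have := mul_right_cancel₀ hq2R.ne' hcross
      linarith
    exact_mod_cast this
  -- pigeonhole: some pair of states repeats
  have hpig : ∃ i j : ℤ, 1 ≤ i ∧ i < j ∧ P i = P j ∧ Q i = Q j := by
    have hsN : s ≤ (N:ℝ) := by nlinarith
    have hbound : ∀ m : ℤ, 1 ≤ m → (P m, Q m) ∈ Finset.Icc (1:ℤ) N ×ˢ Finset.Icc (1:ℤ) N := by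
      intro m hm
      obtain ⟨hq, hp, hps, hr4, hr5⟩ := hRed m hm
      have hPN : P m ≤ (N:ℤ) := by
        have : (P m : ℝ) < (N:ℝ) := lt_of_lt_of_le hps hsN
        have : P m < (N:ℤ) := by exact_mod_cast this
        omega
      have hQN : Q m ≤ (N:ℤ) := by
        have h1 := hQrec (m-1) (by omega)
        rw [sub_add_cancel] at h1
        have h2 : 0 < Q (m-1) := hQposZ (m-1) (by omega)
        nlinarith
      simp only [Finset.mem_product, Finset.mem_Icc]
      exact ⟨⟨by omega, hPN⟩, ⟨by omega, hQN⟩⟩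
    have hcard : ((Finset.Icc (1:ℤ) N) ×ˢ (Finset.Icc (1:ℤ) N)).card < (Finset.range (N*N+1)).card := by
      rw [Finset.card_product, Finset.card_range, Int.card_Icc]
      have : ((N:ℤ) + 1 - 1).toNat = N := by omega
      rw [this]; omega
    obtain ⟨b1, hb1, b2, hb2, hne, heq⟩ :=
      Finset.exists_ne_map_eq_of_card_lt_of_maps_to hcard
        (fun n _ => hbound ((n:ℤ)+1) (by omega))
    rcases Nat.lt_or_ge b1 b2 with h | h
    · refine ⟨(b1:ℤ)+1, (b2:ℤ)+1, by omega, by exact_mod_cast (by omega : (b1:ℤ)+1 < (b2:ℤ)+1), ?_, ?_⟩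
      · exact congrArg Prod.fst heq
      · exact congrArg Prod.snd heq
    · have h' : b2 < b1 := by omega
      refine ⟨(b2:ℤ)+1, (b1:ℤ)+1, by omega, by exact_mod_cast (by omega : (b2:ℤ)+1 < (b1:ℤ)+1), ?_, ?_⟩
      · exact (congrArg Prod.fst heq).symm
      · exact (congrArg Prod.snd heq).symm
  -- backward-step lemma: equality of states propagates backwards
  have hback : ∀ k ρ : ℤ, 1 ≤ k → 1 ≤ ρ →
      P (k+1) = P (k+1+ρ) → Q (k+1) = Q (k+1+ρ) → P k = P (k+ρ) ∧ Q k = Q (k+ρ) := by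
    intro k ρ hk hρ hPk hQk
    have hk0 : (0:ℤ) ≤ k := by omega
    have hkρ0 : (0:ℤ) ≤ k + ρ := by omega
    have hQkpos := hQposZ k hk0
    have hQkρpos := hQposZ (k+ρ) hkρ0
    have hQk1pos := hQposZ (k+1) (by omega)
    -- Q part
    have e1 := hQrec k hk0
    have e2 := hQrec (k+ρ) hkρ0
    rw [show k + ρ + 1 = k + 1 + ρ by ring] at e2
    rw [← hPk, ← hQk] at e2
    have hQQ : Q k = Q (k+ρ) := by
      exact mul_left_cancel₀ hQk1pos.ne' (e1.trans e2.symm)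
    refine ⟨?_, hQQ⟩
    -- P part via uniqueness
    have p1 := hPrec k hk0
    have p2 := hPrec (k+ρ) hkρ0
    rw [show k + ρ + 1 = k + 1 + ρ by ring] at p2
    rw [← hPk, ← hQQ] at p2
    have hdvd : Q k ∣ (P k - P (k+ρ)) := ⟨a k - a (k+ρ), by linear_combination p1 - p2⟩
    obtain ⟨_, _, hps1, _, hr51⟩ := hRed k hk
    obtain ⟨_, _, hps2, _, hr52⟩ := hRed (k+ρ) (by omega)
    rw [← hQQ] at hr52
    exact huniq (P k) (P (k+ρ)) (Q k) hQkpos hdvd (by push_cast; linarith) hps1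
      (by push_cast; linarith) hps2
  -- existence of a period ρ for the full state
  have hρex : ∃ ρ : ℤ, 1 ≤ ρ ∧ ∀ m : ℤ, 1 ≤ m → P (m+ρ) = P m ∧ Q (m+ρ) = Q m := by
    obtain ⟨i, j, hi, hij, hPij, hQij⟩ := hpig
    refine ⟨j - i, by omega, ?_⟩
    -- backwards from i to 1
    have hb : ∀ t : ℤ, 0 ≤ t → t ≤ i - 1 →
        P (i - t) = P (i - t + (j - i)) ∧ Q (i - t) = Q (i - t + (j - i)) := by
      refine Int.le_induction ?_ ?_
      · intro _
        constructor
        · rw [show i - 0 + (j - i) = j by ring]; simpa using hPij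
        · rw [show i - 0 + (j - i) = j by ring]; simpa using hQij
      · intro t ht ih hle
        obtain ⟨ihP, ihQ⟩ := ih (by omega)
        have hk : 1 ≤ i - (t + 1) := by omega
        have := hback (i - (t+1)) (j - i) hk (by omega)
          (by rw [show i - (t+1) + 1 = i - t by ring]; exact ihP)
          (by rw [show i - (t+1) + 1 = i - t by ring]; exact ihQ)
        exact ⟨this.1, this.2⟩
    have hbase := hb (i - 1) (by omega) le_rfl
    rw [show i - (i-1) = 1 by ring] at hbase
    -- forward induction
    refine Int.le_induction ?_ ?_
    · exact ⟨hbase.1.symm, hbase.2.symm⟩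
    · intro m hm ih
      obtain ⟨ihP, ihQ⟩ := ih
      have hm0 : (0:ℤ) ≤ m := by omega
      have hmρ0 : (0:ℤ) ≤ m + (j - i) := by omega
      have haeq : a (m + (j-i)) = a m := by
        rw [ha m hm0, ha (m + (j-i)) hmρ0, ihP, ihQ]
      have p1 := hPrec m hm0
      have p2 := hPrec (m + (j-i)) hmρ0
      rw [show m + (j-i) + 1 = m + 1 + (j - i) by ring, haeq, ihP, ihQ] at p2
      have hPnew : P (m + 1 + (j - i)) = P (m + 1) := by rw [p1, p2]
      refine ⟨hPnew, ?_⟩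
      have e1 := hQrec m hm0
      have e2 := hQrec (m + (j-i)) hmρ0
      rw [show m + (j-i) + 1 = m + 1 + (j - i) by ring, hPnew, ihQ] at e2
      have hQmpos := hQposZ m hm0
      exact mul_right_cancel₀ hQmpos.ne' (e2.trans e1.symm)
  obtain ⟨ρ, hρ1, hρper⟩ := hρex
  -- complete quotients
  set xi : ℤ → ℝ := fun m => ((P m : ℝ) + s) / (Q m : ℝ) with hxidef
  have hxi : ∀ m : ℤ, xi m = ((P m : ℝ) + s) / (Q m : ℝ) := fun m => rfl
  have hxigt1 : ∀ m : ℤ, 1 ≤ m → 1 < xi m := by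
    intro m hm
    obtain ⟨hq, hp, hps, hr4, hr5⟩ := hRed m hm
    have hqR : (0:ℝ) < (Q m : ℝ) := by exact_mod_cast hq
    rw [hxi, lt_div_iff₀ hqR, one_mul]
    exact hr4
  have hxrec : ∀ m : ℤ, 1 ≤ m → xi (m+1) * (xi m - (a m : ℝ)) = 1 := by
    intro m hm
    have hm0 : (0:ℤ) ≤ m := by omega
    have hq := hQposZ m hm0
    have hq' := hQposZ (m+1) (by omega)
    have hqR : (0:ℝ) < (Q m : ℝ) := by exact_mod_cast hq
    have hq'R : (0:ℝ) < (Q (m+1) : ℝ) := by exact_mod_cast hq'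
    have hpc : (P (m+1) : ℝ) = (a m : ℝ) * Q m - (P m : ℝ) := by
      rw [hPrec m hm0]; push_cast; ring
    have hqrc : (Q (m+1) : ℝ) * (Q m : ℝ) = (N:ℝ) - (P (m+1):ℝ)^2 := by
      have h := hQrec m hm0
      have h2 : ((Q (m+1) * Q m : ℤ) : ℝ) = (((N : ℤ) - P (m+1)^2 : ℤ) : ℝ) := by rw [h]
      push_cast at h2; linarith
    have h1 : xi m - (a m : ℝ) = (s - (P (m+1):ℝ)) / (Q m : ℝ) := by
      rw [hxi, eq_div_iff hqR.ne', sub_mul, div_mul_cancel₀ _ hqR.ne']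
      linear_combination hpc
    rw [h1, hxi, div_mul_div_comm]
    rw [div_eq_one_iff_eq (by positivity)]
    linear_combination hs2 - hqrc
  have hτ1 : (1:ℤ) ≤ (τ:ℤ) := by exact_mod_cast hτ
  have hgrow : ∀ m : ℤ, 1 ≤ m →
      xi (m+1) - xi (m+τ+1) = xi (m+1) * xi (m+τ+1) * (xi (m+τ) - xi m) := by
    intro m hm
    have e1 := hxrec m hm
    have e2 := hxrec (m+τ) (by omega)
    rw [hper m hm] at e2
    linear_combination (xi (m+τ+1)) * e1 - (xi (m+1)) * e2
  -- τ-periodicity of the full state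
  have hPQτ : ∀ m : ℤ, 1 ≤ m → P (m+τ) = P m ∧ Q (m+τ) = Q m := by
    intro m hm
    have hxiρ : ∀ x : ℤ, 1 ≤ x → xi (x+ρ) = xi x := by
      intro x hx
      rw [hxi, hxi, (hρper x hx).1, (hρper x hx).2]
    have hxieq : xi (m+τ) = xi m := by
      by_contra hne
      have hdm : xi (m+τ) - xi m ≠ 0 := sub_ne_zero.mpr hne
      have hchain : ∀ t : ℤ, 0 ≤ t →
          |xi (m+τ) - xi m| ≤ |xi (m+t+τ) - xi (m+t)| ∧ xi (m+t+τ) - xi (m+t) ≠ 0 := by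
        refine Int.le_induction ?_ ?_
        · constructor
          · rw [show m + 0 + (τ:ℤ) = m + τ by ring, show m + 0 = m by ring]
          · rw [show m + 0 + (τ:ℤ) = m + τ by ring, show m + 0 = m by ring]; exact hdm
        · intro t ht ih
          obtain ⟨ih1, ih2⟩ := ih
          have hgs := hgrow (m+t) (by omega)
          have hX := hxigt1 (m+t+1) (by omega)
          have hY := hxigt1 (m+t+τ+1) (by omega)
          have habs : |xi (m+t+τ+1) - xi (m+t+1)|
              = xi (m+t+1) * xi (m+t+τ+1) * |xi (m+t+τ) - xi (m+t)| := by
            rw [abs_sub_comm, hgs, abs_mul, abs_mul,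
              abs_of_pos (zero_lt_one.trans hX), abs_of_pos (zero_lt_one.trans hY)]
          have habs_nn : (0:ℝ) ≤ |xi (m+t+τ) - xi (m+t)| := abs_nonneg _
          have habs_pos : (0:ℝ) < |xi (m+t+τ) - xi (m+t)| := abs_pos.mpr ih2
          rw [show m + (t+1) + (τ:ℤ) = m + t + τ + 1 by ring, show m + (t+1) = m + t + 1 by ring]
          have hXY : (1:ℝ) ≤ xi (m+t+1) * xi (m+t+τ+1) := by nlinarith
          constructor
          · rw [habs]
            calc |xi (m+τ) - xi m| ≤ |xi (m+t+τ) - xi (m+t)| := ih1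
              _ = 1 * |xi (m+t+τ) - xi (m+t)| := (one_mul _).symm
              _ ≤ xi (m+t+1) * xi (m+t+τ+1) * |xi (m+t+τ) - xi (m+t)| :=
                  mul_le_mul_of_nonneg_right hXY habs_nn
          · have : (0:ℝ) < |xi (m+t+τ+1) - xi (m+t+1)| := by
              rw [habs]
              exact mul_pos (mul_pos (zero_lt_one.trans hX) (zero_lt_one.trans hY)) habs_pos
            exact abs_pos.mp this
      obtain ⟨hc1, hc2⟩ := hchain (ρ-1) (by omega)
      have hgs := hgrow (m+ρ-1) (by omega)
      rw [show m + ρ - 1 + 1 = m + ρ by ring, show m + ρ - 1 + (τ:ℤ) + 1 = (m + τ) + ρ by ring,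
        show m + ρ - 1 + (τ:ℤ) = m + (ρ-1) + τ by ring, show m + ρ - 1 = m + (ρ-1) by ring,
        hxiρ m hm, hxiρ (m+τ) (by omega)] at hgs
      have hX := hxigt1 m hm
      have hY := hxigt1 (m+τ) (by omega)
      have habs_pos : (0:ℝ) < |xi (m+(ρ-1)+τ) - xi (m+(ρ-1))| := abs_pos.mpr hc2
      have hDabs : |xi (m+τ) - xi m| = xi m * xi (m+τ) * |xi (m+(ρ-1)+τ) - xi (m+(ρ-1))| := by
        rw [← abs_sub_comm (xi m) (xi (m+τ)), hgs, abs_mul, abs_mul,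
          abs_of_pos (zero_lt_one.trans hX), abs_of_pos (zero_lt_one.trans hY)]
      have hXY : (1:ℝ) < xi m * xi (m+τ) := by nlinarith
      have hlt : |xi (m+(ρ-1)+τ) - xi (m+(ρ-1))| < xi m * xi (m+τ) * |xi (m+(ρ-1)+τ) - xi (m+(ρ-1))| := by
        calc |xi (m+(ρ-1)+τ) - xi (m+(ρ-1))| = 1 * |xi (m+(ρ-1)+τ) - xi (m+(ρ-1))| := (one_mul _).symm
          _ < _ := mul_lt_mul_of_pos_right hXY habs_pos
      linarith
    have hQτpos := hQposZ (m+τ) (by omega)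
    have hQmpos := hQposZ m (by omega)
    rw [hxi, hxi] at hxieq
    exact hsurd (P (m+τ)) (Q (m+τ)) (P m) (Q m) hQτpos hQmpos hxieq
  -- Q τ = 1 and P τ = P 1
  have hQτ1 : Q (τ:ℤ) = 1 := by
    have e := hQrec (τ:ℤ) (by omega)
    have h1 := hPQτ 1 le_rfl
    rw [show (1:ℤ) + τ = (τ:ℤ) + 1 by ring] at h1
    rw [h1.1] at e
    have e0 := hQrec 0 le_rfl
    rw [hQ0, mul_one] at e0
    norm_num at e0
    rw [h1.2] at e
    rw [← e0] at e
    have hQ1pos := hQposZ 1 (by omega)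
    have := mul_left_cancel₀ hQ1pos.ne' (e.trans (mul_one (Q 1)).symm)
    exact this
  have hPτ : P (τ:ℤ) = P 1 := by
    obtain ⟨hqτ, hpτ, hpsτ, hr4τ, hr5τ⟩ := hRed (τ:ℤ) hτ1
    refine huniq (P (τ:ℤ)) (P 1) 1 one_pos (one_dvd _) ?_ hpsτ ?_ ?_
    · rw [hQτ1] at hr5τ; push_cast at hr5τ ⊢; linarith
    · rw [hP1]; push_cast; linarith [Int.sub_one_lt_floor s]
    · rw [hP1]; exact hfl1
  -- palindromic symmetry
  obtain ⟨k, hk⟩ := hτodd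
  have hkτ : (τ:ℤ) = 2*k + 1 := by exact_mod_cast hk
  have hsym : ∀ m : ℕ, m ≤ k → Q ((τ:ℤ) - m) = Q (m:ℤ) ∧ P ((τ:ℤ) - m) = P ((m:ℤ)+1) := by
    intro m hm
    induction m with
    | zero =>
      constructor
      · rw [show (τ:ℤ) - (0:ℕ) = (τ:ℤ) by push_cast; ring, hQτ1]
        rw [show ((0:ℕ):ℤ) = (0:ℤ) by norm_num, hQ0]
      · rw [show (τ:ℤ) - (0:ℕ) = (τ:ℤ) by push_cast; ring, hPτ]
        norm_num
    | succ m ih =>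
      obtain ⟨ihQ, ihP⟩ := ih (by omega)
      have hmk : m + 1 ≤ k := hm
      set A : ℤ := (τ:ℤ) - m with hA
      have hA1 : (1:ℤ) ≤ A - 1 := by omega
      have hAm1 : (0:ℤ) ≤ A - 1 := by omega
      have hQApos : 0 < Q A := hQposZ A (by omega)
      have hQm1pos : 0 < Q ((m:ℤ)+1) := hQposZ ((m:ℤ)+1) (by omega)
      -- Q part
      have e1 := hQrec (A-1) hAm1
      rw [show A - 1 + 1 = A by ring] at e1
      have e2 := hQrec (m:ℤ) (by omega)
      have hQnew : Q (A - 1) = Q ((m:ℤ)+1) := by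
        rw [ihP] at e1
        rw [← ihQ] at e2
        have : Q A * Q (A-1) = Q ((m:ℤ)+1) * Q A := by rw [e1, ← e2]
        have h2 : Q A * Q (A-1) = Q A * Q ((m:ℤ)+1) := by linarith [this, mul_comm (Q ((m:ℤ)+1)) (Q A)]
        exact mul_left_cancel₀ hQApos.ne' h2
      -- P part
      have p1 := hPrec (A-1) hAm1
      rw [show A - 1 + 1 = A by ring] at p1
      have p2 := hPrec ((m:ℤ)+1) (by omega)
      have hdvd : Q ((m:ℤ)+1) ∣ (P (A-1) - P ((m:ℤ)+1+1)) := by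
        refine ⟨a (A-1) - a ((m:ℤ)+1), ?_⟩
        rw [hQnew, ihP] at p1
        linear_combination p1 - p2
      obtain ⟨hqa, hpa, hpsa, hr4a, hr5a⟩ := hRed (A-1) hA1
      obtain ⟨hqb, hpb, hpsb, hr4b, hr5b⟩ := hRed ((m:ℤ)+1+1) (by omega)
      obtain ⟨hfa, hfb⟩ := hfr ((m:ℤ)+1) (by omega) hQm1pos
      have hPnew : P (A-1) = P ((m:ℤ)+1+1) := by
        refine huniq _ _ (Q ((m:ℤ)+1)) hQm1pos hdvd ?_ hpsa ?_ hpsb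
        · rw [← hQnew]; push_cast; linarith
        · push_cast at hfb ⊢; linarith
      constructor
      · rw [show (τ:ℤ) - ((m+1:ℕ):ℤ) = A - 1 by push_cast; omega]
        rw [hQnew]; norm_num
      · rw [show (τ:ℤ) - ((m+1:ℕ):ℤ) = A - 1 by push_cast; omega]
        rw [hPnew]; push_cast; ring_nf
  -- conclusion
  obtain ⟨hQfin, hPfin⟩ := hsym k le_rfl
  have hAk : (τ:ℤ) - k = (k:ℤ) + 1 := by omega
  rw [hAk] at hQfin
  have hidx : ((τ + 1) / 2 : ℕ) = k + 1 := by omega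
  have e := hQrec (k:ℤ) (by omega)
  rw [← hQfin] at e
  have hfinal : (N : ℤ) = Q ((k:ℤ)+1) ^ 2 + P ((k:ℤ)+1) ^ 2 := by
    have : Q ((k:ℤ)+1) * Q ((k:ℤ)+1) = (N:ℤ) - P ((k:ℤ)+1)^2 := e
    nlinarith [this]
  constructor
  · exact ⟨Q ((k:ℤ)+1), P ((k:ℤ)+1), hfinal⟩
  · rw [hidx]
    push_cast
    exact hfinal
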